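/- A closed M-alternating trail of even length (alternating matched and unmatched edges, starting with one and ending with the other) in a capacitated graph is proper: for every vertex v on the trail, d_v^{T △ M} = d_v^M ≤ c_v; hence if M is a maximum-weight c-matching, no such closed trail is M-augmenting, i.e., w(T \ M) ≤ w(T ∩ M). -/

import Mathlib

variable {V : Type*}

/-- Degree of a vertex with respect to an edge set. -/
def degOn [DecidableEq V] (M : Finset (Sym2 V)) (v : V) : ℕ :=
  (M.filter (fun e => v ∈ e)).card

/-- Total weight of an edge set. -/
def wsum (w : Sym2 V → ℝ) (M : Finset (Sym2 V)) : ℝ := ∑ e ∈ M, w e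

/-- A `c`-matching: a set of edges of `G` with every vertex degree at most its capacity. -/
def IsCMatching [DecidableEq V] (G : SimpleGraph V) (c : V → ℕ) (M : Finset (Sym2 V)) : Prop :=
  (∀ e ∈ M, e ∈ G.edgeSet) ∧ ∀ v, degOn M v ≤ c v

/-- A maximum-weight `c`-matching. -/
def IsMaxCMatching [DecidableEq V] (G : SimpleGraph V) (w : Sym2 V → ℝ) (c : V → ℕ)
    (M : Finset (Sym2 V)) : Prop :=
  IsCMatching G c M ∧ ∀ N, IsCMatching G c N → wsum w N ≤ wsum w M

/-- A list of edges is `M`-alternating if consecutive edges alternate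
between `M` and its complement. -/
def Alternating [DecidableEq V] (M : Finset (Sym2 V)) (l : List (Sym2 V)) : Prop :=
  l.Chain' (fun e f => (e ∈ M ↔ f ∉ M))

/-- Weight (with multiplicity) of the matched edges of a list. -/
def matchedWeight [DecidableEq V] (w : Sym2 V → ℝ) (M : Finset (Sym2 V))
    (l : List (Sym2 V)) : ℝ :=
  ((l.filter (fun e => decide (e ∈ M))).map w).sum

/-- Weight (with multiplicity) of the unmatched edges of a list. -/
def unmatchedWeight [DecidableEq V] (w : Sym2 V → ℝ) (M : Finset (Sym2 V))
    (l : List (Sym2 V)) : ℝ :=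
  ((l.filter (fun e => decide (e ∉ M))).map w).sum

/-- `M`-augmenting: `w(l \ M) > w(l ∩ M)` (multiplicities counted). -/
def Augmenting [DecidableEq V] (w : Sym2 V → ℝ) (M : Finset (Sym2 V)) (l : List (Sym2 V)) : Prop :=
  matchedWeight w M l < unmatchedWeight w M l

/-- Fractional degree `Σ_{e ∈ δ(v)} x_e`. -/
def lpDeg [Fintype V] [DecidableEq V] (x : Sym2 V → ℝ) (v : V) : ℝ :=
  ∑ e : Sym2 V, if v ∈ e then x e else 0

/-- A fractional `c`-matching. -/
def IsFracCMatching [Fintype V] [DecidableEq V] (G : SimpleGraph V) (c : V → ℕ)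
    (x : Sym2 V → ℝ) : Prop :=
  (∀ e, 0 ≤ x e ∧ x e ≤ 1) ∧ (∀ e, e ∉ G.edgeSet → x e = 0) ∧ ∀ v, lpDeg x v ≤ (c v : ℝ)

/-- LP objective value `w^T x`. -/
def lpVal [Fintype V] (w x : Sym2 V → ℝ) : ℝ := ∑ e : Sym2 V, w e * x e

/-- `ν^c(G)`: maximum weight of a `c`-matching. -/
noncomputable def nuC [Fintype V] [DecidableEq V] (G : SimpleGraph V) (w : Sym2 V → ℝ)
    (c : V → ℕ) : ℝ :=
  sSup {r | ∃ M, IsCMatching G c M ∧ r = wsum w M}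

/-- `ν_f^c(G)`: optimum of the fractional `c`-matching LP. -/
noncomputable def nuF [Fintype V] [DecidableEq V] (G : SimpleGraph V) (w : Sym2 V → ℝ)
    (c : V → ℕ) : ℝ :=
  sSup {r | ∃ x, IsFracCMatching G c x ∧ r = lpVal w x}

/-- A capacitated graph is stable if `ν^c(G) = ν_f^c(G)`. -/
def Stable [Fintype V] [DecidableEq V] (G : SimpleGraph V) (w : Sym2 V → ℝ) (c : V → ℕ) : Prop :=
  nuC G w c = nuF G w c

/-- The ε-augmentation `x^{M/W}(ε)` of a walk. -/
def epsAug [DecidableEq V] {G : SimpleGraph V} {u v : V} (M : Finset (Sym2 V))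
    (p : G.Walk u v) (ε : ℝ) : Sym2 V → ℝ :=
  fun e => if e ∈ M then 1 - (p.edges.count e : ℝ) * ε else (p.edges.count e : ℝ) * ε

/-- Symmetric difference of edge sets. -/
def symmDiffE [DecidableEq V] (M T : Finset (Sym2 V)) : Finset (Sym2 V) := (M \ T) ∪ (T \ M)

section Aux
variable [DecidableEq V]

def sgnM (M : Finset (Sym2 V)) (e : Sym2 V) : ℤ := if e ∈ M then 1 else -1

def gfun (M : Finset (Sym2 V)) (l : List (Sym2 V)) (x : V) : ℤ :=
  (l.map (fun e => if x ∈ e then sgnM M e else 0)).sum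

lemma gfun_cons (M : Finset (Sym2 V)) (e : Sym2 V) (l : List (Sym2 V)) (x : V) :
    gfun M (e :: l) x = (if x ∈ e then sgnM M e else 0) + gfun M l x := by
  simp [gfun]

lemma walk_gfun {G : SimpleGraph V} (M : Finset (Sym2 V)) :
    ∀ {a b : V} (p : G.Walk a b) (hne : p.edges ≠ []),
    Alternating M p.edges → ∀ x : V,
    gfun M p.edges x =
      (if x = a then sgnM M (p.edges.head hne) else 0) +
      (if x = b then sgnM M (p.edges.getLast hne) else 0) := by
  intro a b p
  induction p with
  | nil => intro hne; simp at hne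
  | @cons a c b h q ih =>
    intro hne halt x
    rcases hq : q.edges with _ | ⟨f, rest⟩
    · -- q has no edges, so c = b
      have hcb : c = b := SimpleGraph.Walk.eq_of_length_eq_zero
        (by rw [← SimpleGraph.Walk.length_edges, hq]; rfl)
      subst hcb
      have hab : a ≠ c := h.ne
      simp only [SimpleGraph.Walk.edges_cons, hq, gfun_cons, List.head_cons,
        List.getLast_singleton, gfun, List.map_nil, List.sum_nil, Sym2.mem_iff]
      by_cases hxa : x = a <;> by_cases hxc : x = c <;> simp [hxa, hxc] <;> first | ring1 | exact fun hh => absurd hh (by assumption) | exact fun hh => absurd hh.symm (by assumption)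
    · have hne' : q.edges ≠ [] := by rw [hq]; simp
      have halt2 : List.Chain' (fun e f => (e ∈ M ↔ f ∉ M)) (s(a, c) :: f :: rest) := by
        rw [← hq, ← SimpleGraph.Walk.edges_cons h]; exact halt
      have hcc := List.isChain_cons_cons.mp halt2
      have halt' : Alternating M q.edges := by
        rw [hq]; exact hcc.2
      have hrel : (s(a, c) ∈ M ↔ f ∉ M) := hcc.1
      have hsgn : sgnM M f = - sgnM M s(a, c) := by
        unfold sgnM
        by_cases hm : s(a,c) ∈ M
        · simp [hm, hrel.mp hm]
        · have : f ∈ M := by tauto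
          simp [hm, this]
      have ihq := ih hne' halt' x
      rw [show q.edges.head hne' = f from by simp [hq]] at ihq
      have hgl : (SimpleGraph.Walk.cons h q).edges.getLast hne = q.edges.getLast hne' := by
        simp only [SimpleGraph.Walk.edges_cons]
        exact List.getLast_cons hne'
      have hhd : (SimpleGraph.Walk.cons h q).edges.head hne = s(a, c) := by
        simp [SimpleGraph.Walk.edges_cons]
      rw [hgl, hhd]
      rw [SimpleGraph.Walk.edges_cons, gfun_cons, ihq]
      have hac : a ≠ c := h.ne
      simp only [Sym2.mem_iff, hsgn]
      by_cases hxa : x = a <;> by_cases hxc : x = c <;> simp [hxa, hxc] <;> first | ring1 | exact fun hh => absurd hh (by assumption) | exact fun hh => absurd hh.symm (by assumption)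

lemma alt_get {M : Finset (Sym2 V)} {l : List (Sym2 V)} (h : Alternating M l)
    {i : ℕ} (hi : i < l.length) (h0 : 0 < l.length) :
    (l.get ⟨i, hi⟩ ∈ M ↔ (l.get ⟨0, h0⟩ ∈ M ↔ Even i)) := by
  induction i with
  | zero => simp
  | succ n ihn =>
    have hn : n < l.length := by omega
    have hc := (List.isChain_iff_getElem.mp h) n (by omega)
    have hih := ihn hn
    rw [Nat.even_add_one]
    simp only [List.get_eq_getElem] at hih ⊢
    tauto

lemma alt_head_getLast {M : Finset (Sym2 V)} {l : List (Sym2 V)} (h : Alternating M l)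
    (hne : l ≠ []) (hev : Even l.length) :
    l.getLast hne ∈ M ↔ l.head hne ∉ M := by
  have h0 : 0 < l.length := List.length_pos_iff.mpr hne
  have hkey := alt_get h (i := l.length - 1) (by omega) h0
  have hpar : ¬ Even (l.length - 1) := by
    rw [Nat.not_even_iff]
    rw [Nat.even_iff] at hev
    omega
  rw [List.getLast_eq_getElem]
  have hh : l.head hne = l.get ⟨0, h0⟩ := by
    rcases l with _ | ⟨e, l⟩
    · simp at hne
    · simp
  rw [hh]
  simp only [List.get_eq_getElem] at hkey ⊢
  tauto

lemma gfun_eq_counts (M : Finset (Sym2 V)) (l : List (Sym2 V)) (x : V) :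
    gfun M l x
      = ((l.filter (fun e => decide (x ∈ e ∧ e ∈ M))).length : ℤ)
        - ((l.filter (fun e => decide (x ∈ e ∧ e ∉ M))).length : ℤ) := by
  induction l with
  | nil => simp [gfun]
  | cons e l ih =>
    rw [gfun_cons, ih]
    by_cases hx : x ∈ e <;> by_cases hm : e ∈ M <;>
      simp [hx, hm, sgnM, List.filter_cons] <;> push_cast <;> ring



end Aux

/-- a closed `M`-alternating trail of even length is proper: every vertex on
it satisfies `d_v^{T △ M} = d_v^M ≤ c_v`; hence if `M` is maximum-weight, no such closed
trail is `M`-augmenting. -/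
theorem stmt16 [Fintype V] [DecidableEq V] (G : SimpleGraph V) (w : Sym2 V → ℝ)
    (hw : ∀ e, 0 ≤ w e) (c : V → ℕ) (M : Finset (Sym2 V)) (hM : IsCMatching G c M)
    {u : V} (p : G.Walk u u) (htrail : p.IsTrail)
    (halt : Alternating M p.edges) (heven : Even p.length) :
    (∀ v ∈ p.support,
        degOn (symmDiffE M p.edges.toFinset) v = degOn M v ∧ degOn M v ≤ c v) ∧
      (IsMaxCMatching G w c M → ¬ Augmenting w M p.edges) := by
  by_cases hnil : p.edges = []
  · constructor
    · intro v _
      refine ⟨?_, hM.2 v⟩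
      simp [hnil, symmDiffE]
    · intro _ haug
      simp [Augmenting, matchedWeight, unmatchedWeight, hnil] at haug
  · have hnodup : p.edges.Nodup := htrail.edges_nodup
    have hg0 : ∀ x, gfun M p.edges x = 0 := by
      intro x
      have hwk := walk_gfun M p hnil halt x
      have hlast := alt_head_getLast halt hnil
        (by rw [SimpleGraph.Walk.length_edges]; exact heven)
      have hs : sgnM M (p.edges.getLast hnil) = - sgnM M (p.edges.head hnil) := by
        unfold sgnM
        by_cases hh : p.edges.head hnil ∈ M
        · have : p.edges.getLast hnil ∉ M := by tauto
          simp only [if_pos hh, if_neg this]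
        · have : p.edges.getLast hnil ∈ M := by tauto
          simp only [if_pos this, if_neg hh, neg_neg]
      rw [hwk, hs]
      by_cases hx : x = u <;> simp [hx]
    have hcount : ∀ x, (p.edges.filter (fun e => decide (x ∈ e ∧ e ∈ M))).length
        = (p.edges.filter (fun e => decide (x ∈ e ∧ e ∉ M))).length := by
      intro x
      have h1 := gfun_eq_counts M p.edges x
      rw [hg0 x] at h1
      omega
    have hbridge : ∀ (q : Sym2 V → Prop) (inst : DecidablePred q),
        (p.edges.toFinset.filter q).card = (p.edges.filter (fun e => decide (q e))).length := by
      intro q inst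
      rw [← List.toFinset_card_of_nodup (hnodup.filter _), List.toFinset_filter]
      congr 1
      apply Finset.filter_congr
      intro e _
      simp
    have hAC : ∀ x, (p.edges.toFinset.filter (fun e => x ∈ e ∧ e ∈ M)).card
        = (p.edges.toFinset.filter (fun e => x ∈ e ∧ e ∉ M)).card := by
      intro x
      rw [hbridge _ _, hbridge _ _]
      exact hcount x
    have hdisj : Disjoint (M \ p.edges.toFinset) (p.edges.toFinset \ M) := disjoint_sdiff_sdiff
    have hMT : ∀ x : V, M.filter (fun e => x ∈ e ∧ e ∈ p.edges.toFinset)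
        = p.edges.toFinset.filter (fun e => x ∈ e ∧ e ∈ M) := by
      intro x; ext e
      simp only [Finset.mem_filter]
      tauto
    have hdeg : ∀ x, degOn (symmDiffE M p.edges.toFinset) x = degOn M x := by
      intro x
      have hsplit : (M.filter (fun e => x ∈ e ∧ e ∈ p.edges.toFinset)).card
          + (M.filter (fun e => x ∈ e ∧ e ∉ p.edges.toFinset)).card = degOn M x := by
        have base := Finset.card_filter_add_card_filter_not
          (s := M.filter (fun e => x ∈ e)) (p := fun e => e ∈ p.edges.toFinset)
        rw [Finset.filter_filter, Finset.filter_filter] at base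
        rw [degOn]
        exact base
      have e1 : (M \ p.edges.toFinset).filter (fun e => x ∈ e)
          = M.filter (fun e => x ∈ e ∧ e ∉ p.edges.toFinset) := by
        ext e; simp only [Finset.mem_filter, Finset.mem_sdiff]; tauto
      have e2 : (p.edges.toFinset \ M).filter (fun e => x ∈ e)
          = p.edges.toFinset.filter (fun e => x ∈ e ∧ e ∉ M) := by
        ext e; simp only [Finset.mem_filter, Finset.mem_sdiff]; tauto
      have hd2 : Disjoint (M.filter (fun e => x ∈ e ∧ e ∉ p.edges.toFinset))
          (p.edges.toFinset.filter (fun e => x ∈ e ∧ e ∉ M)) := by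
        rw [Finset.disjoint_left]
        intro e h1 h2
        simp only [Finset.mem_filter] at h1 h2
        by_cases he : e ∈ M <;> tauto
      have hunion : degOn (symmDiffE M p.edges.toFinset) x
          = (M.filter (fun e => x ∈ e ∧ e ∉ p.edges.toFinset)).card
            + (p.edges.toFinset.filter (fun e => x ∈ e ∧ e ∉ M)).card := by
        rw [degOn, symmDiffE, Finset.filter_union, e1, e2, Finset.card_union_of_disjoint hd2]
      rw [hunion, ← hsplit, hMT x, hAC x]
      omega
    constructor
    · intro v _
      exact ⟨hdeg v, hM.2 v⟩
    · intro hmax haug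
      have hNmatch : IsCMatching G c (symmDiffE M p.edges.toFinset) := by
        constructor
        · intro e he
          rcases Finset.mem_union.mp he with h1 | h1
          · exact hM.1 e (Finset.mem_sdiff.mp h1).1
          · exact p.edges_subset_edgeSet (List.mem_toFinset.mp (Finset.mem_sdiff.mp h1).1)
        · intro v
          rw [hdeg v]
          exact hM.2 v
      have hsum : ∀ (q : Sym2 V → Prop) (inst : DecidablePred q),
          (∑ e ∈ p.edges.toFinset.filter q, w e)
            = ((p.edges.filter (fun e => decide (q e))).map w).sum := by
        intro q inst
        rw [← List.sum_toFinset w (hnodup.filter _), List.toFinset_filter]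
        congr 1
        apply Finset.filter_congr
        intro e _
        simp
      have hmw : matchedWeight w M p.edges
          = ∑ e ∈ p.edges.toFinset.filter (fun e => e ∈ M), w e :=
        (hsum _ _).symm
      have humw : unmatchedWeight w M p.edges
          = ∑ e ∈ p.edges.toFinset.filter (fun e => e ∉ M), w e :=
        (hsum _ _).symm
      have hTM : p.edges.toFinset \ M = p.edges.toFinset.filter (fun e => e ∉ M) :=
        Finset.sdiff_eq_filter p.edges.toFinset M
      have hMTd : M \ p.edges.toFinset = M.filter (fun e => e ∉ p.edges.toFinset) :=
        Finset.sdiff_eq_filter M p.edges.toFinset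
      have hMTf : M.filter (fun e => e ∈ p.edges.toFinset)
          = p.edges.toFinset.filter (fun e => e ∈ M) := by
        ext e; simp only [Finset.mem_filter]; tauto
      have hwN : wsum w (symmDiffE M p.edges.toFinset)
          = wsum w M - matchedWeight w M p.edges + unmatchedWeight w M p.edges := by
        rw [symmDiffE, wsum, Finset.sum_union hdisj]
        have hM2 : wsum w M = (∑ e ∈ M.filter (fun e => e ∈ p.edges.toFinset), w e)
            + ∑ e ∈ M.filter (fun e => e ∉ p.edges.toFinset), w e := by
          rw [wsum, Finset.sum_filter_add_sum_filter_not]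
        rw [hmw, humw, hM2, hMTf, hTM, hMTd]
        ring
      have haug' : matchedWeight w M p.edges < unmatchedWeight w M p.edges := haug
      have hle := hmax.2 _ hNmatch
      rw [hwN] at hle
      linarith
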